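/- Let X be a finite alphabet and ≺ a total ordering on the free monoid ⟨X⟩ that is compatible with multiplication (v ≺ w implies avb ≺ awb for all a, b). Then ≺ is a well-ordering if and only if 1 ≺ w for every nonempty word w. -/

import Mathlib

/-- A multiplication-compatible total (strict) ordering on the free monoid over a finite
alphabet is a well-ordering iff the empty word is smaller than every nonempty word. -/
theorem monomial_wellOrdering_iff
    (X : Type*) [Fintype X]
    (r : FreeMonoid X → FreeMonoid X → Prop)
    (hirr : ∀ v, ¬ r v v)
    (htrans : ∀ u v w, r u v → r v w → r u w)
    (htotal : ∀ v w, v ≠ w → r v w ∨ r w v)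
    (hcomp : ∀ a b v w : FreeMonoid X, r v w → r (a * v * b) (a * w * b)) :
    (∀ S : Set (FreeMonoid X), S.Nonempty → ∃ m ∈ S, ∀ s ∈ S, ¬ r s m) ↔
      (∀ w : FreeMonoid X, w ≠ 1 → r 1 w) := by
  constructor
  · intro hwo w hw
    rcases htotal 1 w (Ne.symm hw) with h | h
    · exact h
    · -- r w 1 gives an infinite descending chain w^(n+1) ≺ w^n
      exfalso
      obtain ⟨m, ⟨n, rfl⟩, hmin⟩ := hwo (Set.range (fun n : ℕ => w ^ (n + 1)))
        ⟨w ^ 1, 0, rfl⟩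
      apply hmin (w ^ (n + 2)) ⟨n + 1, rfl⟩
      have := hcomp (w ^ (n + 1)) 1 w 1 h
      simpa [pow_succ, mul_assoc] using this
  · intro hpos S hS
    by_contra hno
    push_neg at hno
    -- build an infinite strictly descending sequence in S
    have hstep : ∀ s ∈ S, ∃ t ∈ S, r t s := by
      intro s hs
      rcases hno s hs with ⟨t, ht, hrt⟩
      exact ⟨t, ht, hrt⟩
    obtain ⟨s₀, hs₀⟩ := hS
    choose g hgS hgr using hstep
    let f : ℕ → {s // s ∈ S} := fun n => Nat.rec ⟨s₀, hs₀⟩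
      (fun _ p => ⟨g p.1 p.2, hgS p.1 p.2⟩) n
    have hdesc : ∀ n, r (f (n + 1)).1 (f n).1 := fun n => hgr (f n).1 (f n).2
    have hdesc' : ∀ n m, m < n → r (f n).1 (f m).1 := by
      intro n
      induction n with
      | zero => intro m hm; omega
      | succ k ih =>
        intro m hmn
        rcases Nat.lt_succ_iff_lt_or_eq.mp hmn with h | rfl
        · exact htrans _ _ _ (hdesc k) (ih m h)
        · exact hdesc m
    -- Higman: find m < n with (f m) a sublist of (f n)
    have hpwo : { l : List X | ∀ x, x ∈ l → x ∈ (Set.univ : Set X)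
        }.PartiallyWellOrderedOn (List.SublistForall₂ (· = ·)) :=
      Set.PartiallyWellOrderedOn.partiallyWellOrderedOn_sublistForall₂ (· = ·)
        (Set.finite_univ.partiallyWellOrderedOn)
    obtain ⟨m, n, hmn, hsub⟩ := hpwo (fun n => ⟨FreeMonoid.toList (f n).1,
      fun _ _ => Set.mem_univ _⟩)
    change List.SublistForall₂ (· = ·) (FreeMonoid.toList (f m).1) (FreeMonoid.toList (f n).1) at hsub
    rw [List.sublistForall₂_iff] at hsub
    obtain ⟨l, hl, hsl⟩ := hsub
    rw [List.forall₂_eq_eq_eq] at hl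
    subst hl
    -- subword lemma: sublist implies eq or r-smaller
    have key : ∀ u v : List X, u.Sublist v →
        FreeMonoid.ofList u = FreeMonoid.ofList v ∨
          r (FreeMonoid.ofList u) (FreeMonoid.ofList v) := by
      intro u v huv
      induction huv with
      | slnil => exact Or.inl rfl
      | cons x _ ih =>
        rename_i u' v' _
        right
        have hx : r (1 : FreeMonoid X) (FreeMonoid.ofList [x]) := by
          apply hpos
          intro h
          exact List.cons_ne_nil x [] (congrArg FreeMonoid.toList h)
        have : r (1 * (1 : FreeMonoid X) * FreeMonoid.ofList v')
            (1 * FreeMonoid.ofList [x] * FreeMonoid.ofList v') :=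
          hcomp 1 (FreeMonoid.ofList v') 1 (FreeMonoid.ofList [x]) hx
        have h2 : r (FreeMonoid.ofList v') (FreeMonoid.ofList (x :: v')) := by
          simpa [← FreeMonoid.ofList_append] using this
        rcases ih with h | h
        · exact h ▸ h2
        · exact htrans _ _ _ h h2
      | cons_cons x _ ih =>
        rename_i u' v' _
        rcases ih with h | h
        · left
          have : u' = v' := congrArg FreeMonoid.toList h
          rw [this]
        · right
          have := hcomp (FreeMonoid.ofList [x]) 1 (FreeMonoid.ofList u')
            (FreeMonoid.ofList v') h
          simpa [← FreeMonoid.ofList_append] using this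
    have hm : FreeMonoid.ofList (FreeMonoid.toList (f m).1) = (f m).1 :=
      FreeMonoid.ofList_toList _
    have hn : FreeMonoid.ofList (FreeMonoid.toList (f n).1) = (f n).1 :=
      FreeMonoid.ofList_toList _
    rcases key _ _ hsl with h | h
    · rw [hm, hn] at h
      exact hirr _ (h ▸ hdesc' n m hmn)
    · rw [hm, hn] at h
      exact hirr _ (htrans _ _ _ h (hdesc' n m hmn))
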